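/- Let G be a digraph on n vertices (n sufficiently large) in which every vertex has out-degree at least 5n/6. Then G contains a perfect fractional (3,1)-tiling: weights in [0,1] on the triples {x,y,z} with complete base graph and minimum internal out-degree at least 1, such that every vertex is covered with total weight exactly 1. -/

import Mathlib

/-- `S` spans a member of `K_{r,s}(G)`: `r` vertices, complete base graph and minimum
out-degree at least `s` inside `S`. -/
def IsKrs {n : ℕ} (G : Fin n → Fin n → Prop) (r s : ℕ) (S : Finset (Fin n)) : Prop :=
  S.card = r ∧ (∀ x ∈ S, ∀ y ∈ S, x ≠ y → G x y ∨ G y x) ∧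
    (∀ x ∈ S, s ≤ Set.ncard {y | y ∈ S ∧ G x y})

namespace K31

open Finset

attribute [local instance] Classical.propDecidable
set_option linter.unusedSectionVars false
set_option linter.unnecessarySeqFocus false

variable {n : ℕ} {G : Fin n → Fin n → Prop}

noncomputable def outF (G : Fin n → Fin n → Prop) (v : Fin n) : Finset (Fin n) :=
  univ.filter (fun w => G v w)

noncomputable def inF (G : Fin n → Fin n → Prop) (v : Fin n) : Finset (Fin n) :=
  univ.filter (fun u => G u v)

noncomputable def missF (G : Fin n → Fin n → Prop) (v : Fin n) : Finset (Fin n) :=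
  univ.filter (fun w => w ≠ v ∧ ¬ G v w)

lemma ncard_eq_filter_card (P : Fin n → Prop) :
    Set.ncard {y | P y} = (univ.filter P).card := by
  rw [← Set.ncard_coe_finset]
  congr 1
  ext y; simp

lemma isKrs_mk {x y z : Fin n} (hxy : x ≠ y) (hxz : x ≠ z) (hyz : y ≠ z)
    (axy : G x y ∨ G y x) (axz : G x z ∨ G z x) (ayz : G y z ∨ G z y)
    (ox : G x y ∨ G x z) (oy : G y x ∨ G y z) (oz : G z x ∨ G z y) :
    IsKrs G 3 1 ({x, y, z} : Finset (Fin n)) := by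
  refine ⟨?_, ?_, ?_⟩
  · rw [Finset.card_insert_of_notMem (by simp [hxy, hxz]),
      Finset.card_insert_of_notMem (by simp [hyz]), Finset.card_singleton]
  · intro a ha b hb hab
    simp only [Finset.mem_insert, Finset.mem_singleton] at ha hb
    rcases ha with h|h|h <;> rcases hb with h'|h'|h' <;> subst h <;> subst h' <;>
      first
        | exact absurd rfl hab
        | exact axy | exact axy.symm | exact axz | exact axz.symm | exact ayz | exact ayz.symm
  · intro a ha
    simp only [Finset.mem_insert, Finset.mem_singleton] at ha
    rw [ncard_eq_filter_card]
    rw [Nat.succ_le_iff, Finset.card_pos]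
    rcases ha with h|h|h <;> subst h
    · rcases ox with h|h
      · exact ⟨y, by simp [h]⟩
      · exact ⟨z, by simp [h]⟩
    · rcases oy with h|h
      · exact ⟨x, by simp [h]⟩
      · exact ⟨z, by simp [h]⟩
    · rcases oz with h|h
      · exact ⟨x, by simp [h]⟩
      · exact ⟨y, by simp [h]⟩

section basic

variable (hIrr : ∀ v, ¬ G v v)
  (hDeg : ∀ v : Fin n, 5 * (n : ℝ) / 6 ≤ (Set.ncard {w | G v w} : ℝ))

include hIrr hDeg

lemma outF_card_real (v : Fin n) : 5 * (n : ℝ) / 6 ≤ ((outF G v).card : ℝ) := by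
  have := hDeg v
  rwa [ncard_eq_filter_card] at this

lemma card_split (v : Fin n) : n = 1 + (outF G v).card + (missF G v).card := by
  classical
  have h1 : (univ : Finset (Fin n)) = insert v ((outF G v) ∪ (missF G v)) := by
    ext w
    simp only [mem_univ, mem_insert, mem_union, outF, missF, mem_filter, true_iff, true_and]
    by_cases hw : w = v
    · tauto
    · by_cases hg : G v w <;> tauto
  have hv1 : v ∉ outF G v := by simp [outF, hIrr v]
  have hv2 : v ∉ missF G v := by simp [missF]
  have hdisj : Disjoint (outF G v) (missF G v) := by
    rw [Finset.disjoint_left]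
    intro w hw hw'
    simp [outF, missF, mem_filter] at hw hw'
    exact hw'.2 hw
  have hcard : (univ : Finset (Fin n)).card = 1 + ((outF G v) ∪ (missF G v)).card := by
    rw [h1, Finset.card_insert_of_notMem (by simp [hv1, hv2])]
    ring
  rw [Finset.card_union_of_disjoint hdisj] at hcard
  rw [Finset.card_univ, Fintype.card_fin] at hcard
  omega

lemma missF_lt_q (v : Fin n) : (missF G v).card < n / 6 := by
  set q := n / 6 with hq
  have hsplit := card_split hIrr hDeg v
  have hout := outF_card_real hIrr hDeg v
  have hqr : (n : ℝ) / 6 < (q : ℝ) + 1 := by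
    have : n < 6 * q + 6 := by omega
    have : (n : ℝ) < 6 * (q : ℝ) + 6 := by exact_mod_cast this
    linarith
  have hreal : ((missF G v).card : ℝ) < (q : ℝ) := by
    have hcast : (n : ℝ) = 1 + ((outF G v).card : ℝ) + ((missF G v).card : ℝ) := by
      exact_mod_cast hsplit
    linarith
  exact_mod_cast hreal

end basic

lemma mutual_pair (hIrr : ∀ v, ¬ G v v) {q : ℕ} (hq : 1 ≤ q)
    (hmiss : ∀ v : Fin n, (missF G v).card < q)
    (X : Finset (Fin n)) (hX : 2 * q ≤ X.card) :
    ∃ x ∈ X, ∃ y ∈ X, x ≠ y ∧ G x y ∧ G y x := by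
  by_contra hcon
  push_neg at hcon
  set m := X.card with hm
  have h1 : ∀ x ∈ X, m ≤ q + (X.filter (fun y => G x y)).card := by
    intro x hx
    have hsub : X.filter (fun y => ¬ G x y) ⊆ insert x (missF G x) := by
      intro w hw
      simp only [mem_filter] at hw
      by_cases hwx : w = x
      · simp [hwx]
      · simp [mem_insert, missF, mem_filter, hwx, hw.2]
    have hc1 : (X.filter (fun y => ¬ G x y)).card ≤ q := by
      calc (X.filter (fun y => ¬ G x y)).card ≤ _ := Finset.card_le_card hsub
        _ ≤ (missF G x).card + 1 := Finset.card_insert_le _ _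
        _ ≤ q := by have := hmiss x; omega
    have := Finset.card_filter_add_card_filter_not (s := X) (p := fun y => G x y)
    omega
  have hPlow : m * m ≤ q * m + ∑ x ∈ X, ∑ y ∈ X, (if G x y then 1 else 0) := by
    have hxx : ∀ x ∈ X, m ≤ q + ∑ y ∈ X, (if G x y then 1 else 0) := by
      intro x hx
      have := h1 x hx
      rwa [Finset.card_filter] at this
    calc m * m = ∑ _x ∈ X, m := by rw [Finset.sum_const, smul_eq_mul, mul_comm]
      _ ≤ ∑ x ∈ X, (q + ∑ y ∈ X, (if G x y then 1 else 0)) := Finset.sum_le_sum hxx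
      _ = q * m + _ := by rw [Finset.sum_add_distrib, Finset.sum_const, smul_eq_mul, mul_comm]
  have hsw : (∑ x ∈ X, ∑ y ∈ X, (if G y x then (1:ℕ) else 0))
      = ∑ x ∈ X, ∑ y ∈ X, (if G x y then (1:ℕ) else 0) := Finset.sum_comm ..
  have hPhigh : (∑ x ∈ X, ∑ y ∈ X, (if G x y then (1:ℕ) else 0))
      + (∑ x ∈ X, ∑ y ∈ X, (if G x y then (1:ℕ) else 0)) + m ≤ m * m := by
    have hcomb : (∑ x ∈ X, ∑ y ∈ X, (if G x y then (1:ℕ) else 0))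
        + (∑ x ∈ X, ∑ y ∈ X, (if G x y then (1:ℕ) else 0))
        = ∑ x ∈ X, ∑ y ∈ X, ((if G x y then (1:ℕ) else 0) + (if G y x then 1 else 0)) := by
      nth_rewrite 2 [← hsw]
      rw [← Finset.sum_add_distrib]
      exact Finset.sum_congr rfl (fun x _ => by rw [← Finset.sum_add_distrib])
    have hpt : ∀ x ∈ X, ∀ y ∈ X,
        ((if G x y then (1:ℕ) else 0) + (if G y x then 1 else 0)) ≤ (if x = y then 0 else 1) := by
      intro x hx y hy
      by_cases hxy : x = y
      · subst hxy; simp [hIrr x]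
      · have := hcon x hx y hy hxy
        by_cases h1 : G x y <;> by_cases h2 : G y x <;> simp [h1, h2, hxy] <;> tauto
    have hsum : (∑ x ∈ X, ∑ y ∈ X, (if G x y then (1:ℕ) else 0))
        + (∑ x ∈ X, ∑ y ∈ X, (if G x y then (1:ℕ) else 0))
        ≤ ∑ x ∈ X, ∑ y ∈ X, (if x = y then 0 else 1) := by
      rw [hcomb]
      exact Finset.sum_le_sum (fun x hx => Finset.sum_le_sum (fun y hy => hpt x hx y hy))
    have hdiag : ∀ x ∈ X, (∑ y ∈ X, (if x = y then (0:ℕ) else 1)) = m - 1 := by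
      intro x hx
      have h0 : (∑ y ∈ X, (if x = y then (0:ℕ) else 1)) = ∑ y ∈ X, (if ¬ (x = y) then (1:ℕ) else 0) := by
        exact Finset.sum_congr rfl (fun y _ => by by_cases h : x = y <;> simp [h])
      rw [h0, ← Finset.card_filter]
      have : X.filter (fun y => ¬ (x = y)) = X.erase x := by
        ext z; simp [Finset.mem_erase, and_comm, eq_comm]
      rw [this, Finset.card_erase_of_mem hx]
    have hdsum : (∑ x ∈ X, ∑ y ∈ X, (if x = y then (0:ℕ) else 1)) = m * (m-1) := by
      rw [Finset.sum_congr rfl hdiag, Finset.sum_const, smul_eq_mul]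
    have hmpos : 1 ≤ m := by omega
    rw [hdsum] at hsum
    have : m * (m - 1) + m = m * m := by cases m with
      | zero => omega
      | succ k => simp [Nat.succ_sub_one]; ring
    omega
  nlinarith [hPlow, hPhigh, hX, hq, mul_le_mul_of_nonneg_right hX (Nat.zero_le m)]

/-- apex pattern: a mutual pair inside `N⁺(a) ∩ X`. -/
lemma apex_pair (hIrr : ∀ v, ¬ G v v) {q : ℕ} (hq : 1 ≤ q)
    (hmiss : ∀ v : Fin n, (missF G v).card < q)
    (a : Fin n) (X : Finset (Fin n)) (haX : a ∉ X) (hX : 3 * q ≤ X.card + 1) :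
    ∃ x ∈ X, ∃ y ∈ X, x ≠ y ∧ G a x ∧ G a y ∧ G x y ∧ G y x := by
  have hsub : X.filter (fun w => ¬ G a w) ⊆ missF G a := by
    intro w hw
    simp only [mem_filter] at hw
    have : w ≠ a := fun h => haX (h ▸ hw.1)
    simp [missF, mem_filter, this, hw.2]
  have hcard : 2 * q ≤ (X.filter (fun w => G a w)).card := by
    have h1 : (X.filter (fun w => ¬ G a w)).card ≤ q - 1 := by
      have := Finset.card_le_card hsub
      have := hmiss a
      omega
    have := Finset.card_filter_add_card_filter_not (s := X) (p := fun w => G a w)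
    omega
  obtain ⟨x, hx, y, hy, hxy, hG⟩ := mutual_pair hIrr hq hmiss _ hcard
  simp only [mem_filter] at hx hy
  exact ⟨x, hx.1, y, hy.1, hxy, hx.2, hy.2, hG⟩

section indeg

variable (hIrr : ∀ v, ¬ G v v)
  (hDeg : ∀ v : Fin n, 5 * (n : ℝ) / 6 ≤ (Set.ncard {w | G v w} : ℝ))

include hIrr hDeg

lemma sum_deg_eq : ∑ v : Fin n, (outF G v).card = ∑ v : Fin n, (inF G v).card := by
  have h1 : ∀ v : Fin n, (outF G v).card = ∑ w : Fin n, (if G v w then 1 else 0) := by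
    intro v; rw [outF, Finset.card_filter]
  have h2 : ∀ v : Fin n, (inF G v).card = ∑ u : Fin n, (if G u v then 1 else 0) := by
    intro v; rw [inF, Finset.card_filter]
  rw [Finset.sum_congr rfl (fun v _ => h1 v), Finset.sum_congr rfl (fun v _ => h2 v)]
  exact Finset.sum_comm

lemma outF_ge (v : Fin n) : n ≤ (outF G v).card + n / 6 := by
  have h1 := card_split hIrr hDeg v
  have h2 := missF_lt_q hIrr hDeg v
  omega

/-- few vertices have in-degree at most `3q`. -/
lemma smallIn_card_lt (hn : 6 ≤ n) :
    ((univ : Finset (Fin n)).filter (fun v => (inF G v).card ≤ 3 * (n / 6))).card < 2 * (n / 6) := by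
  set q := n / 6 with hq
  have hq1 : 1 ≤ q := by omega
  have h6q : 6 * q ≤ n := by omega
  have hinle : ∀ v : Fin n, (inF G v).card + 1 ≤ n := by
    intro v
    have hsub : inF G v ⊆ univ.erase v := by
      intro u hu
      simp only [inF, mem_filter] at hu
      have : u ≠ v := fun h => hIrr v (h ▸ hu.2)
      simp [Finset.mem_erase, this]
    have := Finset.card_le_card hsub
    rw [Finset.card_erase_of_mem (mem_univ v), Finset.card_univ, Fintype.card_fin] at this
    omega
  have hde : ((univ : Finset (Fin n)).filter (fun v => (inF G v).card ≤ 3 * q)).card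
      + ((univ : Finset (Fin n)).filter (fun v => ¬ ((inF G v).card ≤ 3 * q))).card = n := by
    have := Finset.card_filter_add_card_filter_not (s := (univ : Finset (Fin n)))
      (p := fun v => (inF G v).card ≤ 3 * q)
    rwa [Finset.card_univ, Fintype.card_fin] at this
  set s := ((univ : Finset (Fin n)).filter (fun v => (inF G v).card ≤ 3 * q)).card with hs
  set e := ((univ : Finset (Fin n)).filter (fun v => ¬ ((inF G v).card ≤ 3 * q))).card with he
  have hsplit : ∑ v : Fin n, (inF G v).card
      = ∑ v ∈ (univ : Finset (Fin n)).filter (fun v => (inF G v).card ≤ 3 * q), (inF G v).card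
      + ∑ v ∈ (univ : Finset (Fin n)).filter (fun v => ¬ ((inF G v).card ≤ 3 * q)), (inF G v).card :=
    (Finset.sum_filter_add_sum_filter_not (univ : Finset (Fin n))
      (fun v => (inF G v).card ≤ 3 * q) _).symm
  have hup : ∑ v : Fin n, (inF G v).card ≤ s * (3 * q) + e * (n - 1) := by
    rw [hsplit]
    have h1 : ∑ v ∈ (univ : Finset (Fin n)).filter (fun v => (inF G v).card ≤ 3 * q), (inF G v).card
        ≤ s * (3 * q) := by
      calc _ ≤ ∑ _v ∈ (univ : Finset (Fin n)).filter (fun v => (inF G v).card ≤ 3 * q), 3 * q :=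
            Finset.sum_le_sum (fun v hv => by simp only [mem_filter] at hv; exact hv.2)
        _ = s * (3 * q) := by rw [Finset.sum_const, smul_eq_mul]
    have h2 : ∑ v ∈ (univ : Finset (Fin n)).filter (fun v => ¬ ((inF G v).card ≤ 3 * q)), (inF G v).card
        ≤ e * (n - 1) := by
      calc _ ≤ ∑ _v ∈ (univ : Finset (Fin n)).filter (fun v => ¬ ((inF G v).card ≤ 3 * q)), (n - 1) :=
            Finset.sum_le_sum (fun v _ => by have := hinle v; omega)
        _ = e * (n - 1) := by rw [Finset.sum_const, smul_eq_mul]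
    omega
  have hlow : n * n ≤ (∑ v : Fin n, (inF G v).card) + n * q := by
    rw [← sum_deg_eq hIrr hDeg]
    have hov : ∀ v : Fin n, n ≤ (outF G v).card + q := fun v => outF_ge hIrr hDeg v
    calc n * n = ∑ _v : Fin n, n := by
          rw [Finset.sum_const, Finset.card_univ, Fintype.card_fin, smul_eq_mul, mul_comm]
      _ ≤ ∑ v : Fin n, ((outF G v).card + q) := Finset.sum_le_sum (fun v _ => hov v)
      _ = (∑ v : Fin n, (outF G v).card) + n * q := by
          rw [Finset.sum_add_distrib, Finset.sum_const, Finset.card_univ, Fintype.card_fin,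
            smul_eq_mul, mul_comm]
  by_contra hcon
  push_neg at hcon
  -- cast to integers
  have key : (n : ℤ) * n ≤ s * (3 * q) + e * (n - 1) + n * q := by
    have h3 : (n:ℤ) * n ≤ ((∑ v : Fin n, (inF G v).card : ℕ) : ℤ) + n * q := by exact_mod_cast hlow
    have h4 : ((∑ v : Fin n, (inF G v).card : ℕ) : ℤ) ≤ s * (3 * q) + e * ((n:ℤ) - 1) := by
      have := hup
      have hcast : ((s * (3 * q) + e * (n - 1) : ℕ) : ℤ) = s * (3*q) + e * ((n:ℤ) - 1) := by
        push_cast [Nat.cast_sub (by omega : 1 ≤ n)]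
        ring
      calc ((∑ v : Fin n, (inF G v).card : ℕ) : ℤ) ≤ ((s * (3 * q) + e * (n - 1) : ℕ) : ℤ) := by
            exact_mod_cast this
        _ = _ := hcast
    linarith
  have hde' : (s : ℤ) + e = n := by exact_mod_cast hde
  have hcon' : (2:ℤ) * q ≤ s := by exact_mod_cast hcon
  have h6q' : (6:ℤ) * q ≤ n := by exact_mod_cast h6q
  have hq1' : (1:ℤ) ≤ q := by exact_mod_cast hq1
  nlinarith [key, hde', hcon', h6q', hq1', mul_le_mul_of_nonneg_right h6q' (by linarith : (0:ℤ) ≤ q),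
    mul_le_mul_of_nonneg_right hcon' (by linarith : (0:ℤ) ≤ (n:ℤ) - 3*q - 1)]

end indeg

section lemB

variable (hIrr : ∀ v, ¬ G v v)
  (hDeg : ∀ v : Fin n, 5 * (n : ℝ) / 6 ≤ (Set.ncard {w | G v w} : ℝ))

include hIrr hDeg

/-- Lemma B: a valid triple with one vertex in `L`, another in `L'`, third in `Z`. -/
lemma two_low_triple (hn : 6 ≤ n)
    (L L' Z : Finset (Fin n)) (hL : n / 6 + 1 ≤ L.card) (hL' : 2 * (n / 6) ≤ L'.card)
    (hZ : n ≤ Z.card + (n / 6 - 1)) :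
    ∃ x ∈ L, ∃ y ∈ L', ∃ z ∈ Z, x ≠ y ∧ x ≠ z ∧ y ≠ z ∧ IsKrs G 3 1 ({x, y, z} : Finset (Fin n)) := by
  set q := n / 6 with hq
  have hq1 : 1 ≤ q := by omega
  have hmiss : ∀ v : Fin n, (missF G v).card < q := fun v => missF_lt_q hIrr hDeg v
  have hZc : (univ \ Z).card ≤ q - 1 := by
    have : (univ \ Z).card = n - Z.card := by
      rw [Finset.card_sdiff_of_subset (Finset.subset_univ Z), Finset.card_univ, Fintype.card_fin]
    omega
  -- find y* in L' with large in-degree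
  have hSp := smallIn_card_lt hIrr hDeg hn
  rw [← hq] at hSp
  have hYex : ∃ y ∈ L', 3 * q + 1 ≤ (inF G y).card := by
    by_contra hcc
    push_neg at hcc
    have hsub : L' ⊆ (univ : Finset (Fin n)).filter (fun v => (inF G v).card ≤ 3 * q) := by
      intro y hy
      simp only [mem_filter, mem_univ, true_and]
      have := hcc y hy
      omega
    have := Finset.card_le_card hsub
    omega
  obtain ⟨Y, hYL', hYin⟩ := hYex
  -- find x* in L adjacent to Y
  have hXex : ∃ x ∈ L, x ≠ Y ∧ (G Y x ∨ G x Y) := by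
    by_contra hcc
    push_neg at hcc
    have hsub : L ⊆ insert Y (missF G Y) := by
      intro x hx
      by_cases hxY : x = Y
      · simp [hxY]
      · have h2 := hcc x hx hxY
        simp only [Finset.mem_insert, missF, mem_filter, mem_univ, true_and]
        right
        exact ⟨hxY, h2.1⟩
    have := Finset.card_le_card hsub
    have h3 := Finset.card_insert_le Y (missF G Y)
    have := hmiss Y
    omega
  obtain ⟨X, hXL, hXY, hadj⟩ := hXex
  -- helper bounds
  have hmiss_out : ∀ a : Fin n, ∀ (T : Finset (Fin n)),
      (T.filter (fun w => ¬ G a w)).card ≤ (missF G a).card + 1 := by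
    intro a T
    have hsub : T.filter (fun w => ¬ G a w) ⊆ insert a (missF G a) := by
      intro w hw
      simp only [mem_filter] at hw
      by_cases hwa : w = a
      · simp [hwa]
      · simp only [Finset.mem_insert, missF, mem_filter, mem_univ, true_and]
        right; exact ⟨hwa, hw.2⟩
    calc _ ≤ _ := Finset.card_le_card hsub
      _ ≤ _ := Finset.card_insert_le _ _
  rcases hadj with hYX | hXYedge
  · -- case Y → X : directed triangle Y→X, X→z, z→Y
    -- W := inF Y ∩ outF X ∩ Z minus {X, Y}
    set W := (((inF G Y ∩ outF G X) ∩ Z) \ {X, Y}) with hW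
    have hWne : W.Nonempty := by
      rw [← Finset.card_pos]
      by_contra hc
      push_neg at hc
      interval_cases h : W.card
      · -- covering argument
        have hcover : inF G Y ⊆ ((inF G Y).filter (fun w => ¬ G X w)) ∪ (univ \ Z) ∪ {X, Y} ∪ W := by
          intro u hu
          by_cases h1 : G X u
          · by_cases h2 : u ∈ Z
            · by_cases h3 : u ∈ ({X, Y} : Finset (Fin n))
              · simp only [Finset.mem_union]; tauto
              · have : u ∈ W := by
                  rw [hW]
                  simp only [Finset.mem_sdiff, Finset.mem_inter]
                  refine ⟨⟨⟨hu, ?_⟩, h2⟩, h3⟩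
                  simp [outF, h1]
                simp only [Finset.mem_union]; tauto
            · have : u ∈ univ \ Z := by simp [Finset.mem_sdiff, h2]
              simp only [Finset.mem_union]; tauto
          · have : u ∈ (inF G Y).filter (fun w => ¬ G X w) := by simp [mem_filter, hu, h1]
            simp only [Finset.mem_union]; tauto
        have hc1 := Finset.card_le_card hcover
        have hc2 := Finset.card_union_le (((inF G Y).filter (fun w => ¬ G X w)) ∪ (univ \ Z) ∪ {X, Y}) W
        have hc3 := Finset.card_union_le (((inF G Y).filter (fun w => ¬ G X w)) ∪ (univ \ Z)) ({X, Y} : Finset (Fin n))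
        have hc4 := Finset.card_union_le ((inF G Y).filter (fun w => ¬ G X w)) (univ \ Z)
        have hc5 := hmiss_out X (inF G Y)
        have hc6 : ({X, Y} : Finset (Fin n)).card ≤ 2 := Finset.card_insert_le _ _ |>.trans (by simp)
        have := hmiss X
        omega
    obtain ⟨z, hz⟩ := hWne
    rw [hW] at hz
    simp only [Finset.mem_sdiff, Finset.mem_inter, Finset.mem_insert, Finset.mem_singleton] at hz
    obtain ⟨⟨⟨hzin, hzout⟩, hzZ⟩, hzne⟩ := hz
    push_neg at hzne
    simp only [inF, outF, mem_filter, mem_univ, true_and] at hzin hzout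
    refine ⟨X, hXL, Y, hYL', z, hzZ, hXY, fun h => hzne.1 h.symm, fun h => hzne.2 h.symm, ?_⟩
    exact isKrs_mk hXY (fun h => hzne.1 h.symm) (fun h => hzne.2 h.symm)
      (Or.inr hYX) (Or.inl hzout) (Or.inr hzin)
      (Or.inr hzout) (Or.inl hYX) (Or.inr hzin)
  · -- case X → Y : pattern X→Y, X→z, Y↔z
    set W := (((inF G Y ∩ outF G Y ∩ outF G X) ∩ Z) \ {X}) with hW
    have hWne : W.Nonempty := by
      rw [← Finset.card_pos]
      by_contra hc
      push_neg at hc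
      interval_cases h : W.card
      · have hcover : inF G Y ⊆ ((inF G Y).filter (fun w => ¬ G Y w))
            ∪ ((inF G Y).filter (fun w => ¬ G X w)) ∪ (univ \ Z) ∪ {X} ∪ W := by
          intro u hu
          by_cases h0 : G Y u
          · by_cases h1 : G X u
            · by_cases h2 : u ∈ Z
              · by_cases h3 : u ∈ ({X} : Finset (Fin n))
                · simp only [Finset.mem_union]; tauto
                · have : u ∈ W := by
                    rw [hW]
                    simp only [Finset.mem_sdiff, Finset.mem_inter]
                    refine ⟨⟨⟨⟨hu, ?_⟩, ?_⟩, h2⟩, h3⟩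
                    · simp [outF, h0]
                    · simp [outF, h1]
                  simp only [Finset.mem_union]; tauto
              · have : u ∈ univ \ Z := by simp [Finset.mem_sdiff, h2]
                simp only [Finset.mem_union]; tauto
            · have : u ∈ (inF G Y).filter (fun w => ¬ G X w) := by simp [mem_filter, hu, h1]
              simp only [Finset.mem_union]; tauto
          · have : u ∈ (inF G Y).filter (fun w => ¬ G Y w) := by simp [mem_filter, hu, h0]
            simp only [Finset.mem_union]; tauto
        have hc1 := Finset.card_le_card hcover
        have hc2 := Finset.card_union_le (((inF G Y).filter (fun w => ¬ G Y w))
            ∪ ((inF G Y).filter (fun w => ¬ G X w)) ∪ (univ \ Z) ∪ {X}) W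
        have hc3 := Finset.card_union_le (((inF G Y).filter (fun w => ¬ G Y w))
            ∪ ((inF G Y).filter (fun w => ¬ G X w)) ∪ (univ \ Z)) ({X} : Finset (Fin n))
        have hc4 := Finset.card_union_le (((inF G Y).filter (fun w => ¬ G Y w))
            ∪ ((inF G Y).filter (fun w => ¬ G X w))) (univ \ Z)
        have hc5 := Finset.card_union_le ((inF G Y).filter (fun w => ¬ G Y w))
            ((inF G Y).filter (fun w => ¬ G X w))
        have hc6 := hmiss_out X (inF G Y)
        have hc7 : ((inF G Y).filter (fun w => ¬ G Y w)).card ≤ (missF G Y).card := by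
          apply Finset.card_le_card
          intro u hu
          simp only [mem_filter, inF, mem_univ, true_and] at hu
          have hune : u ≠ Y := fun h => hIrr Y (h ▸ hu.1)
          simp only [missF, mem_filter, mem_univ, true_and]
          exact ⟨hune, hu.2⟩
        have hc8 : ({X} : Finset (Fin n)).card = 1 := by simp
        have := hmiss X
        have := hmiss Y
        omega
    obtain ⟨z, hz⟩ := hWne
    rw [hW] at hz
    simp only [Finset.mem_sdiff, Finset.mem_inter, Finset.mem_singleton] at hz
    obtain ⟨⟨⟨⟨hzin, hzout⟩, hzoutX⟩, hzZ⟩, hzne⟩ := hz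
    simp only [inF, outF, mem_filter, mem_univ, true_and] at hzin hzout hzoutX
    have hzY : z ≠ Y := fun h => hIrr Y (h ▸ hzin)
    refine ⟨X, hXL, Y, hYL', z, hzZ, hXY, fun h => hzne h.symm, fun h => hzY h.symm, ?_⟩
    exact isKrs_mk hXY (fun h => hzne h.symm) (fun h => hzY h.symm)
      (Or.inl hXYedge) (Or.inl hzoutX) (Or.inl hzout)
      (Or.inl hXYedge) (Or.inr hzout) (Or.inr hzin)

end lemB

section cover

variable (hIrr : ∀ v, ¬ G v v)
  (hDeg : ∀ v : Fin n, 5 * (n : ℝ) / 6 ≤ (Set.ncard {w | G v w} : ℝ))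

include hIrr hDeg

lemma triple_sum {c : Fin n → ℝ} {x y z : Fin n} (hxy : x ≠ y) (hxz : x ≠ z) (hyz : y ≠ z) :
    ∑ v ∈ ({x, y, z} : Finset (Fin n)), c v = c x + c y + c z := by
  rw [Finset.sum_insert (by simp [hxy, hxz]), Finset.sum_insert (by simp [hyz]),
    Finset.sum_singleton]
  ring

omit hIrr hDeg in
lemma filter_lt_card (k : ℕ) (hk : k ≤ n) :
    ((univ : Finset (Fin n)).filter (fun i : Fin n => (i : ℕ) < k)).card = k := by
  have heq : ((univ : Finset (Fin n)).filter (fun i : Fin n => (i : ℕ) < k))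
      = (Finset.range k).attachFin (fun m hm => lt_of_lt_of_le (Finset.mem_range.mp hm) hk) := by
    ext i
    simp [Finset.mem_attachFin]
  rw [heq, Finset.card_attachFin, Finset.card_range]

/-- The key combinatorial bound: any nonnegative fractional cover of the valid triples
has total weight at least `n/3`. -/
lemma cover_bound (hn : 100 ≤ n) (c : Fin n → ℝ) (hc0 : ∀ v, 0 ≤ c v)
    (hT : ∀ S : Finset (Fin n), IsKrs G 3 1 S → 1 ≤ ∑ v ∈ S, c v) :
    (n : ℝ) / 3 ≤ ∑ v, c v := by
  have hn6 : 6 ≤ n := by omega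
  set q := n / 6 with hq
  have hq16 : 16 ≤ q := by omega
  have hmiss : ∀ v : Fin n, (missF G v).card < q := fun v => missF_lt_q hIrr hDeg v
  set σ := Tuple.sort c with hσ
  have hmono : Monotone (c ∘ σ) := Tuple.monotone_sort c
  set T : ℕ → ℝ := fun j => if h : j < n then c (σ ⟨j, h⟩) else 0 with hTdef
  have hTval : ∀ (i : Fin n), T (i : ℕ) = c (σ i) := by
    intro i
    simp only [hTdef, i.isLt, dif_pos, Fin.eta]
  have hTmono : ∀ a b : ℕ, a ≤ b → b < n → T a ≤ T b := by
    intro a b hab hbn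
    have han : a < n := lt_of_le_of_lt hab hbn
    simp only [hTdef, dif_pos han, dif_pos hbn]
    exact hmono (by exact_mod_cast hab : (⟨a, han⟩ : Fin n) ≤ ⟨b, hbn⟩)
  have hTnn : ∀ j, 0 ≤ T j := by
    intro j
    by_cases h : j < n
    · simp only [hTdef, dif_pos h]; exact hc0 _
    · simp only [hTdef, dif_neg h]; exact le_refl 0
  have hsum : ∑ j ∈ Finset.range n, T j = ∑ v, c v := by
    rw [← Fin.sum_univ_eq_sum_range T n]
    rw [Finset.sum_congr rfl (fun i _ => hTval i)]
    exact Equiv.sum_comp σ c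
  -- bottom prefix sets
  set bot : ℕ → Finset (Fin n) :=
    fun k => ((univ : Finset (Fin n)).filter (fun i : Fin n => (i : ℕ) < k)).image σ with hbot
  have hbcard : ∀ k, k ≤ n → (bot k).card = k := by
    intro k hk
    rw [hbot]
    rw [Finset.card_image_of_injective _ (Equiv.injective σ)]
    exact filter_lt_card k hk
  have hbmem : ∀ k, 1 ≤ k → k ≤ n → ∀ v ∈ bot k, c v ≤ T (k - 1) := by
    intro k hk1 hkn v hv
    simp only [hbot, Finset.mem_image, Finset.mem_filter, Finset.mem_univ, true_and] at hv
    obtain ⟨i, hik, rfl⟩ := hv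
    rw [← hTval i]
    exact hTmono _ _ (by omega) (by omega)
  have hpairb : ∀ k, 2 ≤ k → k ≤ n → ∀ x y : Fin n, x ∈ bot k → y ∈ bot k → x ≠ y →
      c x + c y ≤ T (k - 2) + T (k - 1) := by
    intro k hk2 hkn x y hx hy hxy
    simp only [hbot, Finset.mem_image, Finset.mem_filter, Finset.mem_univ, true_and] at hx hy
    obtain ⟨i, hik, rfl⟩ := hx
    obtain ⟨j, hjk, rfl⟩ := hy
    have hij : i ≠ j := fun h => hxy (by rw [h])
    rw [← hTval i, ← hTval j]
    rcases lt_or_gt_of_ne (fun h => hij (Fin.ext h) : (i:ℕ) ≠ (j:ℕ)) with h | h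
    · have h1 := hTmono (i:ℕ) (k-2) (by omega) (by omega)
      have h2 := hTmono (j:ℕ) (k-1) (by omega) (by omega)
      linarith
    · have h1 := hTmono (j:ℕ) (k-2) (by omega) (by omega)
      have h2 := hTmono (i:ℕ) (k-1) (by omega) (by omega)
      linarith
  -- singles inequality
  have hD1 : ∀ j, j < n → 1 ≤ T j + (T (3*q-2) + T (3*q-1)) := by
    intro j hj
    set a := σ ⟨j, hj⟩ with ha
    have h3q : 3*q ≤ n := by omega
    obtain ⟨x, hx, y, hy, hxy, hGax, hGay, hGxy, hGyx⟩ :=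
      apex_pair hIrr (by omega) hmiss a ((bot (3*q)).erase a) (Finset.notMem_erase _ _)
        (by
          have h1 := hbcard (3*q) h3q
          have h4 := Finset.pred_card_le_card_erase (a := a) (s := bot (3*q))
          omega)
    have hax : a ≠ x := by rintro rfl; exact (Finset.notMem_erase a _) hx
    have hay : a ≠ y := by rintro rfl; exact (Finset.notMem_erase a _) hy
    have hK := isKrs_mk hax hay hxy (Or.inl hGax) (Or.inl hGay) (Or.inl hGxy)
      (Or.inl hGax) (Or.inr hGxy) (Or.inr hGyx)
    have h1 := hT _ hK
    rw [triple_sum hIrr hDeg hax hay hxy] at h1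
    have hxb : x ∈ bot (3*q) := (Finset.erase_subset _ _) hx
    have hyb : y ∈ bot (3*q) := (Finset.erase_subset _ _) hy
    have h2 := hpairb (3*q) (by omega) h3q x y hxb hyb hxy
    have h3 : c a = T j := (hTval ⟨j, hj⟩).symm
    rw [h3] at h1
    linarith
  -- T(3q-1) ≥ 1/3
  have hc13 : 1 ≤ 3 * T (3*q-1) := by
    have h1 := hD1 (3*q-1) (by omega)
    have h2 := hTmono (3*q-2) (3*q-1) (by omega) (by omega)
    linarith
  -- pairs inequality
  have hD3 : ∀ k, k < q - 1 → 1 ≤ T (q+1+k) + T (2*q+k) + T (n-q) := by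
    intro k hk
    obtain ⟨x, hx, y, hy, z, hz, hxy, hxz, hyz, hK⟩ :=
      two_low_triple hIrr hDeg hn6 (bot (q+2+k)) (bot (2*q+1+k)) (bot (n-q+1))
        (by rw [hbcard (q+2+k) (by omega)]; omega)
        (by rw [hbcard (2*q+1+k) (by omega)]; omega)
        (by rw [hbcard (n-q+1) (by omega)]; omega)
    have h1 := hT _ hK
    rw [triple_sum hIrr hDeg hxy hxz hyz] at h1
    have h2 := hbmem (q+2+k) (by omega) (by omega) x hx
    have h3 := hbmem (2*q+1+k) (by omega) (by omega) y hy
    have h4 := hbmem (n-q+1) (by omega) (by omega) z hz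
    have e2 : q+2+k-1 = q+1+k := by omega
    have e3 : 2*q+1+k-1 = 2*q+k := by omega
    have e4 : n-q+1-1 = n-q := by omega
    rw [e2] at h2; rw [e3] at h3; rw [e4] at h4
    linarith
  -- summation
  have hsplit : ∑ j ∈ Finset.range n, T j
      = ∑ j ∈ Finset.Ico 0 (q+1), T j + ∑ j ∈ Finset.Ico (q+1) (2*q), T j
      + ∑ j ∈ Finset.Ico (2*q) (3*q-1), T j + ∑ j ∈ Finset.Ico (3*q-1) (n-q+1), T j
      + ∑ j ∈ Finset.Ico (n-q+1) n, T j := by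
    rw [Finset.range_eq_Ico]
    rw [← Finset.sum_Ico_consecutive T (by omega : 0 ≤ q+1) (by omega : q+1 ≤ n)]
    rw [← Finset.sum_Ico_consecutive T (by omega : q+1 ≤ 2*q) (by omega : 2*q ≤ n)]
    rw [← Finset.sum_Ico_consecutive T (by omega : 2*q ≤ 3*q-1) (by omega : 3*q-1 ≤ n)]
    rw [← Finset.sum_Ico_consecutive T (by omega : 3*q-1 ≤ n-q+1) (by omega : n-q+1 ≤ n)]
    ring
  set c' := T (3*q-1) with hc'
  set f := T (n-q) with hf
  set τ₂ := T (3*q-2) + T (3*q-1) with hτ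
  -- block bounds
  have hB2 : (((q:ℝ) - 1)) * (1 - f) ≤ ∑ j ∈ Finset.Ico (q+1) (2*q), T j
      + ∑ j ∈ Finset.Ico (2*q) (3*q-1), T j := by
    rw [Finset.sum_Ico_eq_sum_range, Finset.sum_Ico_eq_sum_range]
    have e1 : 2*q - (q+1) = q-1 := by omega
    have e2 : 3*q-1 - 2*q = q-1 := by omega
    rw [e1, e2, ← Finset.sum_add_distrib]
    have hpt : ∀ k ∈ Finset.range (q-1), (1 - f) ≤ T (q+1+k) + T (2*q+k) := by
      intro k hk
      have := hD3 k (by simpa using Finset.mem_range.mp hk)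
      linarith
    calc ((q:ℝ) - 1) * (1-f) = ((q-1 : ℕ) : ℝ) * (1-f) := by
          push_cast [Nat.cast_sub (by omega : 1 ≤ q)]; ring
      _ = (Finset.range (q-1)).card • (1-f) := by rw [Finset.card_range, nsmul_eq_mul]
      _ ≤ _ := Finset.card_nsmul_le_sum _ _ _ hpt
  have hB4 : ((n:ℝ) - 4*q + 2) * c' ≤ ∑ j ∈ Finset.Ico (3*q-1) (n-q+1), T j := by
    have hcard : (Finset.Ico (3*q-1) (n-q+1)).card = n - 4*q + 2 := by
      rw [Nat.card_Ico]; omega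
    have hpt : ∀ j ∈ Finset.Ico (3*q-1) (n-q+1), c' ≤ T j := by
      intro j hj
      rw [Finset.mem_Ico] at hj
      exact hTmono (3*q-1) j hj.1 (by omega)
    calc ((n:ℝ) - 4*q + 2) * c' = ((n - 4*q + 2 : ℕ) : ℝ) * c' := by
          push_cast [Nat.cast_sub (by omega : 4*q ≤ n)]; ring
      _ = (Finset.Ico (3*q-1) (n-q+1)).card • c' := by rw [hcard, nsmul_eq_mul]
      _ ≤ _ := Finset.card_nsmul_le_sum _ _ _ hpt
  have hB5 : ((q:ℝ) - 1) * f ≤ ∑ j ∈ Finset.Ico (n-q+1) n, T j := by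
    have hcard : (Finset.Ico (n-q+1) n).card = q - 1 := by
      rw [Nat.card_Ico]; omega
    have hpt : ∀ j ∈ Finset.Ico (n-q+1) n, f ≤ T j := by
      intro j hj
      rw [Finset.mem_Ico] at hj
      exact hTmono (n-q) j (by omega) (by omega)
    calc ((q:ℝ) - 1) * f = ((q - 1 : ℕ) : ℝ) * f := by
          push_cast [Nat.cast_sub (by omega : 1 ≤ q)]; ring
      _ = (Finset.Ico (n-q+1) n).card • f := by rw [hcard, nsmul_eq_mul]
      _ ≤ _ := Finset.card_nsmul_le_sum _ _ _ hpt
  have hB1nn : 0 ≤ ∑ j ∈ Finset.Ico 0 (q+1), T j :=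
    Finset.sum_nonneg (fun j _ => hTnn j)
  -- real versions of n,q facts
  have hNQ : 6 * (q:ℝ) ≤ (n:ℝ) := by exact_mod_cast (by omega : 6*q ≤ n)
  have hQ16 : (16:ℝ) ≤ (q:ℝ) := by exact_mod_cast hq16
  rw [← hsum]
  by_cases hcase : c' ≤ 1/2
  · -- low median case
    have hB1 : ((q:ℝ) + 1) * (1 - τ₂) ≤ ∑ j ∈ Finset.Ico 0 (q+1), T j := by
      have hcard : (Finset.Ico 0 (q+1)).card = q + 1 := by rw [Nat.card_Ico]; omega
      have hpt : ∀ j ∈ Finset.Ico 0 (q+1), (1 - τ₂) ≤ T j := by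
        intro j hj
        rw [Finset.mem_Ico] at hj
        have := hD1 j (by omega)
        simp only [hτ]
        linarith
      calc ((q:ℝ) + 1) * (1 - τ₂) = ((q+1 : ℕ) : ℝ) * (1 - τ₂) := by push_cast; ring
        _ = (Finset.Ico 0 (q+1)).card • (1 - τ₂) := by rw [hcard, nsmul_eq_mul]
        _ ≤ _ := Finset.card_nsmul_le_sum _ _ _ hpt
    have hττ : τ₂ ≤ 2 * c' := by
      simp only [hτ, hc']
      have := hTmono (3*q-2) (3*q-1) (by omega) (by omega)
      linarith
    have hprod : ((n:ℝ) - 6*q) * (1/3) ≤ ((n:ℝ) - 6*q) * c' := by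
      apply mul_le_mul_of_nonneg_left _ (by linarith)
      linarith
    rw [hsplit]
    nlinarith [hB1, hB2, hB4, hB5, hprod, hττ, hc13]
  · -- high median case
    push_neg at hcase
    have hprod : ((n:ℝ) - 4*q + 2) * (1/2) ≤ ((n:ℝ) - 4*q + 2) * c' := by
      apply mul_le_mul_of_nonneg_left (le_of_lt hcase) (by linarith)
    rw [hsplit]
    nlinarith [hB1nn, hB2, hB4, hB5, hprod]


end cover

section farkas

variable (E : Finset (Finset (Fin n)))

/-- indicator vector of a triple -/
noncomputable def indV (S : Finset (Fin n)) : Fin n → ℝ := fun v => if v ∈ S then 1 else 0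

/-- the cone generated by indicators of members of `E` -/
def coneK : Set (Fin n → ℝ) :=
  {x | ∃ lam : Finset (Fin n) → ℝ, (∀ S, 0 ≤ lam S) ∧ (∀ S, S ∉ E → lam S = 0) ∧
    x = ∑ S ∈ (Finset.univ : Finset (Finset (Fin n))), lam S • indV S}

lemma indV_injective : Function.Injective (indV (n := n)) := by
  intro S S' h
  ext v
  have := congrFun h v
  simp only [indV] at this
  by_cases h1 : v ∈ S <;> by_cases h2 : v ∈ S' <;> simp [h1, h2] at this ⊢

lemma zero_mem_coneK : (0 : Fin n → ℝ) ∈ coneK E := by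
  refine ⟨0, fun S => le_refl 0, fun S _ => rfl, ?_⟩
  simp

lemma smul_mem_coneK {t : ℝ} (ht : 0 ≤ t) {x : Fin n → ℝ} (hx : x ∈ coneK E) :
    t • x ∈ coneK E := by
  obtain ⟨lam, h0, hsupp, hx⟩ := hx
  refine ⟨fun S => t * lam S, fun S => mul_nonneg ht (h0 S),
    fun S hS => by dsimp only; rw [hsupp S hS, mul_zero], ?_⟩
  rw [hx, Finset.smul_sum]
  exact Finset.sum_congr rfl (fun S _ => by rw [smul_smul])

lemma convex_coneK : Convex ℝ (coneK E) := by
  intro x hx y hy a b ha hb hab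
  obtain ⟨l1, h10, h1s, hx1⟩ := hx
  obtain ⟨l2, h20, h2s, hy2⟩ := hy
  refine ⟨fun S => a * l1 S + b * l2 S,
    fun S => add_nonneg (mul_nonneg ha (h10 S)) (mul_nonneg hb (h20 S)),
    fun S hS => by dsimp only; rw [h1s S hS, h2s S hS]; ring, ?_⟩
  rw [hx1, hy2, Finset.smul_sum, Finset.smul_sum, ← Finset.sum_add_distrib]
  refine Finset.sum_congr rfl (fun S _ => ?_)
  rw [add_smul, smul_smul, smul_smul]

lemma indV_mem_coneK {S : Finset (Fin n)} (hS : S ∈ E) : indV S ∈ coneK E := by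
  classical
  refine ⟨fun S' => if S' = S then 1 else 0, fun S' => by positivity,
    fun S' hS' => by dsimp only; rw [if_neg (by rintro rfl; exact hS' hS)], ?_⟩
  have hpt : ∀ S₁ : Finset (Fin n), (if S₁ = S then (1:ℝ) else 0) • indV S₁
      = if S₁ = S then indV S₁ else 0 := by
    intro S₁; split <;> simp
  rw [Finset.sum_congr rfl (fun S₁ _ => hpt S₁), Finset.sum_ite_eq' Finset.univ S indV]
  simp

lemma sum_indV {S : Finset (Fin n)} (y : Fin n → ℝ) :
    ∑ v, indV S v * y v = ∑ v ∈ S, y v := by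
  have hpt : ∀ v, indV S v * y v = if v ∈ S then y v else 0 := by
    intro v; simp only [indV]; by_cases h : v ∈ S <;> simp [h]
  rw [Finset.sum_congr rfl (fun v _ => hpt v), Finset.sum_ite_mem]
  congr 1
  exact Finset.univ_inter S

lemma indV_mem_image {S : Finset (Fin n)} (hS : S ∈ E) :
    indV S ∈ (↑(E.image indV) : Set (Fin n → ℝ)) := by
  simp only [Finset.coe_image, Set.mem_image, Finset.mem_coe]
  exact ⟨S, hS, rfl⟩

lemma coneK_eq (hEne : E.Nonempty) :
    coneK E = {x | ∃ t : ℝ, 0 ≤ t ∧ ∃ p ∈ convexHull ℝ (↑(E.image indV) : Set (Fin n → ℝ)),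
      x = t • p} := by
  ext x
  constructor
  · rintro ⟨lam, h0, hsupp, rfl⟩
    have hxE : ∑ S ∈ (Finset.univ : Finset (Finset (Fin n))), lam S • indV S
        = ∑ S ∈ E, lam S • indV S := by
      rw [← Finset.sum_subset (Finset.subset_univ E)]
      intro S _ hS
      rw [hsupp S hS, zero_smul]
    by_cases ht : ∑ S ∈ E, lam S = 0
    · obtain ⟨S₀, hS₀⟩ := hEne
      have hall : ∀ S ∈ E, lam S = 0 :=
        (Finset.sum_eq_zero_iff_of_nonneg (fun S _ => h0 S)).mp ht
      refine ⟨0, le_refl 0, indV S₀, subset_convexHull ℝ _ (indV_mem_image E hS₀), ?_⟩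
      rw [hxE, Finset.sum_congr rfl (fun S hS => by rw [hall S hS, zero_smul]),
        Finset.sum_const, smul_zero, zero_smul]
    · have htpos : 0 < ∑ S ∈ E, lam S :=
        lt_of_le_of_ne (Finset.sum_nonneg (fun S _ => h0 S)) (Ne.symm ht)
      refine ⟨∑ S ∈ E, lam S, le_of_lt htpos, E.centerMass lam indV, ?_, ?_⟩
      · exact Finset.centerMass_mem_convexHull E (fun S _ => h0 S) htpos
          (fun S hS => indV_mem_image E hS)
      · rw [Finset.centerMass, smul_smul, mul_inv_cancel₀ ht, one_smul, hxE]
  · rintro ⟨t, ht, p, hp, rfl⟩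
    rw [Finset.mem_convexHull] at hp
    obtain ⟨w, hw0, hw1, hwc⟩ := hp
    classical
    refine ⟨fun S => if S ∈ E then t * w (indV S) else 0, ?_, ?_, ?_⟩
    · intro S
      by_cases hS : S ∈ E
      · simp only [hS, if_true]
        exact mul_nonneg ht (hw0 _ (Finset.mem_image_of_mem _ hS))
      · simp [hS]
    · intro S hS; simp [hS]
    · have h1 : (E.image indV).centerMass w id = ∑ y ∈ E.image indV, w y • y := by
        rw [Finset.centerMass, hw1, inv_one, one_smul]
        simp only [id]
      have h2 : ∑ y ∈ E.image indV, w y • y = ∑ S ∈ E, w (indV S) • indV S :=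
        Finset.sum_image (fun S hS S' hS' h => indV_injective h)
      have h3 : ∑ S ∈ (Finset.univ : Finset (Finset (Fin n))),
          (if S ∈ E then t * w (indV S) else 0) • indV S
          = ∑ S ∈ E, (t * w (indV S)) • indV S := by
        rw [← Finset.sum_subset (Finset.subset_univ E)]
        · exact Finset.sum_congr rfl (fun S hS => by rw [if_pos hS])
        · intro S _ hS
          rw [if_neg hS, zero_smul]
      rw [h3, ← hwc, h1, h2, Finset.smul_sum]
      exact Finset.sum_congr rfl (fun S _ => by rw [smul_smul])

lemma isClosed_coneK (hE3 : ∀ S ∈ E, S.card = 3) (hEne : E.Nonempty) :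
    IsClosed (coneK E) := by
  rw [coneK_eq E hEne]
  set P := convexHull ℝ (↑(E.image indV) : Set (Fin n → ℝ)) with hP
  have hPcomp : IsCompact P := (Set.Finite.isCompact_convexHull (𝕜 := ℝ) (Finset.finite_toSet _))
  set s : (Fin n → ℝ) → ℝ := fun x => ∑ v, x v with hs
  have hscont : Continuous s := by
    apply continuous_finset_sum
    intro v _
    exact continuous_apply v
  have hsP : ∀ p ∈ P, s p = 3 := by
    have hconv : Convex ℝ {x : Fin n → ℝ | s x = 3} := by
      intro x hx y hy a b ha hb hab
      simp only [Set.mem_setOf_eq, hs] at hx hy ⊢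
      have hexp : ∑ v, (a • x + b • y) v = a * ∑ v, x v + b * ∑ v, y v := by
        simp only [Pi.add_apply, Pi.smul_apply, smul_eq_mul]
        rw [Finset.sum_add_distrib, Finset.mul_sum, Finset.mul_sum]
      rw [hexp, hx, hy]
      linarith
    have hgen : (↑(E.image indV) : Set (Fin n → ℝ)) ⊆ {x : Fin n → ℝ | s x = 3} := by
      intro x hx
      simp only [Finset.coe_image, Set.mem_image, Finset.mem_coe] at hx
      obtain ⟨S, hS, rfl⟩ := hx
      simp only [Set.mem_setOf_eq, hs]
      have h1 : ∑ v, indV S v * 1 = ∑ v ∈ S, (1:ℝ) := sum_indV (fun _ => 1)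
      simp only [mul_one] at h1
      rw [h1, Finset.sum_const, hE3 S hS]
      norm_num
    exact fun p hp => convexHull_min hgen hconv hp
  apply IsSeqClosed.isClosed
  intro u x hu hux
  choose t ht p hp hup using hu
  have hsu : ∀ k, t k = s (u k) / 3 := by
    intro k
    have h1 : s (u k) = t k * 3 := by
      rw [hup k]
      have h2 : s (t k • p k) = t k * s (p k) := by
        simp only [hs, Pi.smul_apply, smul_eq_mul]
        rw [Finset.mul_sum]
      rw [h2, hsP _ (hp k)]
    rw [h1]; ring
  have htt : Filter.Tendsto t Filter.atTop (nhds (s x / 3)) := by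
    have h1 : Filter.Tendsto (fun k => s (u k)) Filter.atTop (nhds (s x)) :=
      (hscont.tendsto x).comp hux
    have h2 : Filter.Tendsto (fun k => s (u k) / 3) Filter.atTop (nhds (s x / 3)) :=
      h1.div_const 3
    convert h2 using 2 with k
    exact hsu k
  have ht0 : 0 ≤ s x / 3 := ge_of_tendsto' htt ht
  obtain ⟨p₀, hp₀, φ, hφ, hpφ⟩ := hPcomp.tendsto_subseq hp
  have htφ : Filter.Tendsto (t ∘ φ) Filter.atTop (nhds (s x / 3)) :=
    htt.comp hφ.tendsto_atTop
  have huφ : Filter.Tendsto (u ∘ φ) Filter.atTop (nhds x) :=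
    hux.comp hφ.tendsto_atTop
  have hcomb : Filter.Tendsto (fun k => (t ∘ φ) k • (p ∘ φ) k) Filter.atTop
      (nhds ((s x / 3) • p₀)) := htφ.smul hpφ
  have hueq : (fun k => (t ∘ φ) k • (p ∘ φ) k) = u ∘ φ := by
    funext k
    simp only [Function.comp]
    exact (hup (φ k)).symm
  rw [hueq] at hcomb
  have hxeq : x = (s x / 3) • p₀ := tendsto_nhds_unique huφ hcomb
  exact ⟨s x / 3, ht0, p₀, hp₀, hxeq⟩

end farkas


lemma exists_dual (E : Finset (Finset (Fin n))) (hE3 : ∀ S ∈ E, S.card = 3) (hEne : E.Nonempty)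
    (hnot : (fun _ => (1:ℝ)) ∉ coneK E) :
    ∃ y : Fin n → ℝ, (∀ S ∈ E, ∑ v ∈ S, y v ≤ 0) ∧ 0 < ∑ v, y v := by
  obtain ⟨f, u, hfK, hfx⟩ := geometric_hahn_banach_closed_point (convex_coneK E)
    (isClosed_coneK E hE3 hEne) hnot
  have hu0 : 0 < u := by
    have := hfK 0 (zero_mem_coneK E)
    simpa using this
  have hfle : ∀ b ∈ coneK E, f b ≤ 0 := by
    intro b hb
    by_contra hfb
    push_neg at hfb
    have h1 : ((u+1)/f b) • b ∈ coneK E := smul_mem_coneK E (by positivity) hb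
    have h2 := hfK _ h1
    rw [map_smul, smul_eq_mul, div_mul_cancel₀] at h2
    · linarith
    · exact ne_of_gt hfb
  set y : Fin n → ℝ := fun i => f (fun j => if i = j then 1 else 0) with hy
  have hfrep : ∀ x : Fin n → ℝ, f x = ∑ i, x i * y i := by
    intro x
    conv_lhs => rw [pi_eq_sum_univ x]
    rw [map_sum]
    exact Finset.sum_congr rfl (fun i _ => by rw [map_smul, smul_eq_mul])
  refine ⟨y, ?_, ?_⟩
  · intro S hS
    have h1 := hfle (indV S) (indV_mem_coneK E hS)
    rw [hfrep] at h1
    have h2 : ∑ i, indV S i * y i = ∑ v ∈ S, y v := sum_indV y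
    linarith [h2 ▸ h1]
  · have h1 := hfx
    rw [hfrep] at h1
    simp only [one_mul] at h1
    linarith

end K31

open K31 Finset in
/-- Every sufficiently large digraph with minimum out-degree at least `5n/6` has a
perfect fractional `(3,1)`-tiling. -/
theorem stmt_8 :
    ∃ n₀ : ℕ, ∀ n, n₀ ≤ n → ∀ G : Fin n → Fin n → Prop, (∀ v, ¬ G v v) →
      (∀ v : Fin n, 5 * (n : ℝ) / 6 ≤ (Set.ncard {w | G v w} : ℝ)) →
      ∃ ω : Finset (Fin n) → ℝ,
        (∀ S, 0 ≤ ω S ∧ ω S ≤ 1) ∧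
        (∀ S, ω S ≠ 0 → IsKrs G 3 1 S) ∧
        (∀ v : Fin n, ∑ S ∈ Finset.univ.filter (fun S => v ∈ S), ω S = 1) := by
  classical
  refine ⟨100, fun n hn G hIrr hDeg => ?_⟩
  set E := (Finset.univ : Finset (Finset (Fin n))).filter (fun S => IsKrs G 3 1 S) with hE
  have hE3 : ∀ S ∈ E, S.card = 3 := fun S hS => ((Finset.mem_filter.mp hS).2).1
  have hq16 : 16 ≤ n / 6 := by omega
  have hmiss : ∀ v : Fin n, (missF G v).card < n / 6 := fun v => missF_lt_q hIrr hDeg v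
  have hEne : E.Nonempty := by
    set a : Fin n := ⟨0, by omega⟩ with ha
    obtain ⟨x, hx, yy, hy, hxy, hGax, hGay, hGxy, hGyx⟩ :=
      apex_pair hIrr (by omega) hmiss a ((Finset.univ : Finset (Fin n)).erase a)
        (Finset.notMem_erase _ _)
        (by
          rw [Finset.card_erase_of_mem (Finset.mem_univ a), Finset.card_univ, Fintype.card_fin]
          omega)
    have hax : a ≠ x := by rintro rfl; exact (Finset.notMem_erase a _) hx
    have hay : a ≠ yy := by rintro rfl; exact (Finset.notMem_erase a _) hy
    have hK := isKrs_mk hax hay hxy (Or.inl hGax) (Or.inl hGay) (Or.inl hGxy)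
      (Or.inl hGax) (Or.inr hGxy) (Or.inr hGyx)
    exact ⟨{a, x, yy}, Finset.mem_filter.mpr ⟨Finset.mem_univ _, hK⟩⟩
  by_cases hmem : (fun _ => (1:ℝ)) ∈ coneK E
  · obtain ⟨lam, h0, hsupp, hrep⟩ := hmem
    have hcov : ∀ v : Fin n, ∑ S ∈ Finset.univ.filter (fun S => v ∈ S), lam S = 1 := by
      intro v
      have h1 := congrFun hrep v
      rw [Finset.sum_apply] at h1
      simp only [Pi.smul_apply, smul_eq_mul, indV] at h1
      rw [Finset.sum_filter]
      have h2 : ∀ S : Finset (Fin n), lam S * (if v ∈ S then (1:ℝ) else 0)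
          = if v ∈ S then lam S else 0 := by
        intro S; by_cases h : v ∈ S <;> simp [h]
      rw [Finset.sum_congr rfl (fun S _ => (h2 S).symm)]
      exact h1.symm
    refine ⟨lam, fun S => ⟨h0 S, ?_⟩, fun S hS => ?_, hcov⟩
    · by_cases hz : lam S = 0
      · rw [hz]; norm_num
      · have hSE : S ∈ E := by
          by_contra hc
          exact hz (hsupp S hc)
        have hcard : S.card = 3 := hE3 S hSE
        have hSne : S.Nonempty := Finset.card_pos.mp (by omega)
        obtain ⟨v₀, hv₀⟩ := hSne
        calc lam S ≤ ∑ S' ∈ Finset.univ.filter (fun S' => v₀ ∈ S'), lam S' := by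
              apply Finset.single_le_sum (fun S' _ => h0 S')
              exact Finset.mem_filter.mpr ⟨Finset.mem_univ _, hv₀⟩
          _ = 1 := hcov v₀
    · have hSE : S ∈ E := by
        by_contra hc
        exact hS (hsupp S hc)
      exact (Finset.mem_filter.mp hSE).2
  · exfalso
    obtain ⟨y, hyS, hysum⟩ := exists_dual E hE3 hEne hmem
    obtain ⟨v₀, -, hv₀⟩ := Finset.exists_max_image Finset.univ y ⟨⟨0, by omega⟩, Finset.mem_univ _⟩
    set Y := y v₀ with hY
    have hYpos : 0 < Y := by
      by_contra hc
      push_neg at hc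
      have h1 : ∑ v, y v ≤ 0 :=
        Finset.sum_nonpos (fun v _ => le_trans (hv₀ v (Finset.mem_univ v)) hc)
      linarith
    set c : Fin n → ℝ := fun v => (1 - y v / Y) / 3 with hc
    have hc0 : ∀ v, 0 ≤ c v := by
      intro v
      have h1 : y v / Y ≤ 1 := (div_le_one hYpos).mpr (hv₀ v (Finset.mem_univ v))
      simp only [hc]
      linarith
    have hcsum : ∀ T : Finset (Fin n),
        ∑ v ∈ T, c v = (T.card : ℝ)/3 - (∑ v ∈ T, y v)/(3*Y) := by
      intro T
      simp only [hc]
      rw [← Finset.sum_div, Finset.sum_sub_distrib, Finset.sum_const, ← Finset.sum_div]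
      rw [nsmul_eq_mul, mul_one]
      field_simp
    have hcT : ∀ S : Finset (Fin n), IsKrs G 3 1 S → 1 ≤ ∑ v ∈ S, c v := by
      intro S hK
      have hSE : S ∈ E := Finset.mem_filter.mpr ⟨Finset.mem_univ _, hK⟩
      have h1 := hyS S hSE
      rw [hcsum S, hK.1]
      have h2 : (∑ v ∈ S, y v)/(3*Y) ≤ 0 :=
        div_nonpos_of_nonpos_of_nonneg h1 (by positivity)
      norm_num
      linarith
    have hb := cover_bound hIrr hDeg hn c hc0 hcT
    have hsc : ∑ v, c v = (n : ℝ)/3 - (∑ v, y v)/(3*Y) := by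
      have := hcsum Finset.univ
      rwa [Finset.card_univ, Fintype.card_fin] at this
    rw [hsc] at hb
    have hpos : 0 < (∑ v, y v)/(3*Y) := by positivity
    linarith
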